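/- Let X be a finite set with |X| = r where r ≥ 3, and fix x ∈ X. Then the subconstituent algebra T of K_r with respect to x is isomorphic, as a ℂ-algebra, to Mat₂(ℂ) × ℂ (the direct product of the algebra of 2×2 complex matrices with ℂ). -/

import Mathlib

/-- The all-ones matrix `J` on index set `X`. -/
def Jmat (X : Type*) : Matrix X X ℂ := Matrix.of fun _ _ => 1

/-- The 0-th dual idempotent `E₀*` with respect to the base vertex `x`. -/
def E0s (X : Type*) [DecidableEq X] (x : X) : Matrix X X ℂ :=
  Matrix.diagonal fun y => if y = x then 1 else 0

/-- The adjacency matrix `A = J - I` of the complete graph `K_r`. -/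
def Amat (X : Type*) [DecidableEq X] : Matrix X X ℂ := Jmat X - 1

/-- The dual adjacency matrix `A* = r E₀* - I` of `K_r` with respect to `x`. -/
def AmatStar (X : Type*) [DecidableEq X] (r : ℕ) (x : X) : Matrix X X ℂ :=
  (r : ℂ) • E0s X x - 1

section prods
set_option linter.unusedSectionVars false
variable {X : Type*} [Fintype X] [DecidableEq X] (x : X)

lemma JJ : Jmat X * Jmat X = (Fintype.card X : ℂ) • Jmat X := by
  ext y z; simp [Jmat, Matrix.mul_apply]

lemma mul_e_apply (M : Matrix X X ℂ) (y z : X) :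
    (M * E0s X x) y z = M y z * (if z = x then 1 else 0) := by
  rw [E0s, Matrix.mul_diagonal]

lemma e_mul_apply (M : Matrix X X ℂ) (y z : X) :
    (E0s X x * M) y z = (if y = x then 1 else 0) * M y z := by
  rw [E0s, Matrix.diagonal_mul]

lemma e_apply (y z : X) :
    E0s X x y z = (if y = x then 1 else 0) * (if z = x then 1 else 0) := by
  rw [E0s]
  by_cases hy : y = x <;> by_cases hz : z = x <;>
    simp_all [Matrix.diagonal_apply, eq_comm]

lemma ee : E0s X x * E0s X x = E0s X x := by
  ext y z
  rw [mul_e_apply, e_apply]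
  by_cases hz : z = x <;> simp [hz]

lemma eJ_apply (y z : X) : (E0s X x * Jmat X) y z = if y = x then 1 else 0 := by
  rw [e_mul_apply]; simp [Jmat]

lemma Je_apply (y z : X) : (Jmat X * E0s X x) y z = if z = x then 1 else 0 := by
  rw [mul_e_apply]; simp [Jmat]

lemma eJe : E0s X x * Jmat X * E0s X x = E0s X x := by
  ext y z
  rw [mul_e_apply, eJ_apply, e_apply]

lemma JeJ : Jmat X * E0s X x * Jmat X = Jmat X := by
  ext y z
  rw [Matrix.mul_apply]
  simp only [Je_apply]
  simp [Jmat]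

variable (X) in
noncomputable def Rc : ℂ := (Fintype.card X : ℂ)

lemma pJP : Jmat X * (E0s X x * Jmat X) = Jmat X := by
  rw [← mul_assoc]; exact JeJ x
lemma pJQ : Jmat X * (Jmat X * E0s X x) = Rc X • (Jmat X * E0s X x) := by
  rw [← mul_assoc, JJ, smul_mul_assoc]; rfl
lemma peP : E0s X x * (E0s X x * Jmat X) = E0s X x * Jmat X := by
  rw [← mul_assoc, ee]
lemma peQ : E0s X x * (Jmat X * E0s X x) = E0s X x := by
  rw [← mul_assoc]; exact eJe x
lemma pPJ : E0s X x * Jmat X * Jmat X = Rc X • (E0s X x * Jmat X) := by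
  rw [mul_assoc, JJ, mul_smul_comm]; rfl
lemma pPP : E0s X x * Jmat X * (E0s X x * Jmat X) = E0s X x * Jmat X := by
  rw [← mul_assoc, eJe]
lemma pPQ : E0s X x * Jmat X * (Jmat X * E0s X x) = Rc X • E0s X x := by
  rw [← mul_assoc, mul_assoc _ (Jmat X) (Jmat X), JJ, mul_smul_comm, smul_mul_assoc, eJe]; rfl
lemma pQe : Jmat X * E0s X x * E0s X x = Jmat X * E0s X x := by
  rw [mul_assoc, ee]
lemma pQP : Jmat X * E0s X x * (E0s X x * Jmat X) = Jmat X := by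
  rw [← mul_assoc, pQe]; exact JeJ x
lemma pQQ : Jmat X * E0s X x * (Jmat X * E0s X x) = Jmat X * E0s X x := by
  rw [← mul_assoc, JeJ]

lemma mul_expand (a b c d f a' b' c' d' f' : ℂ) :
    (a•1 + b•Jmat X + c•E0s X x + d•(E0s X x*Jmat X) + f•(Jmat X*E0s X x)) *
    (a'•1 + b'•Jmat X + c'•E0s X x + d'•(E0s X x*Jmat X) + f'•(Jmat X*E0s X x)) =
    (a*a')•1 + (a*b' + b*a' + Rc X*(b*b') + b*d' + f*b' + f*d')•Jmat X
      + (a*c' + c*a' + c*c' + c*f' + d*c' + Rc X*(d*f'))•E0s X x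
      + (a*d' + d*a' + c*b' + c*d' + Rc X*(d*b') + d*d')•(E0s X x*Jmat X)
      + (a*f' + f*a' + b*c' + Rc X*(b*f') + f*c' + f*f')•(Jmat X*E0s X x) := by
  have hJJ := JJ (X := X); rw [show (Fintype.card X : ℂ) = Rc X from rfl] at hJJ
  simp only [add_mul, mul_add, smul_mul_assoc, mul_smul_comm, one_mul, mul_one,
    hJJ, ee, eJe, JeJ, pJP, pJQ, peP, peQ, pPJ, pPP, pPQ, pQe, pQP, pQQ]
  match_scalars <;> ring

noncomputable def psiP (x : X) (p : Matrix (Fin 2) (Fin 2) ℂ × ℂ) : Matrix X X ℂ :=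
  ((Rc X - 1) * p.2) • 1 + (p.1 1 1 - p.2) • Jmat X
  + ((Rc X - 1) * (p.1 0 0 - p.2 - p.1 1 0) - p.1 0 1 + (p.1 1 1 - p.2)) • E0s X x
  + (p.1 0 1 - (p.1 1 1 - p.2)) • (E0s X x * Jmat X)
  + ((Rc X - 1) * p.1 1 0 - (p.1 1 1 - p.2)) • (Jmat X * E0s X x)

noncomputable def psiFun (x : X) (p : Matrix (Fin 2) (Fin 2) ℂ × ℂ) : Matrix X X ℂ :=
  (Rc X - 1)⁻¹ • psiP x p

set_option maxHeartbeats 1000000 in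
lemma psiP_mul (p q : Matrix (Fin 2) (Fin 2) ℂ × ℂ) :
    psiP x p * psiP x q = (Rc X - 1) • psiP x (p * q) := by
  rw [psiP, psiP, psiP, mul_expand]
  simp only [Prod.fst_mul, Prod.snd_mul, Matrix.mul_apply, Fin.sum_univ_two]
  match_scalars <;> ring

lemma psi_mul (h : Rc X - 1 ≠ 0) (p q : Matrix (Fin 2) (Fin 2) ℂ × ℂ) :
    psiFun x (p*q) = psiFun x p * psiFun x q := by
  rw [psiFun, psiFun, psiFun, smul_mul_assoc, mul_smul_comm, psiP_mul, smul_smul, smul_smul]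
  congr 1
  field_simp

lemma psi_one (h : Rc X - 1 ≠ 0) : psiFun x 1 = 1 := by
  have : psiP x 1 = (Rc X - 1) • 1 := by
    rw [psiP]
    norm_num [Matrix.one_apply]
  rw [psiFun, this, smul_smul, inv_mul_cancel₀ h, one_smul]

lemma psi_add (p q : Matrix (Fin 2) (Fin 2) ℂ × ℂ) :
    psiFun x (p + q) = psiFun x p + psiFun x q := by
  rw [psiFun, psiFun, psiFun, psiP, psiP, psiP, ← smul_add]
  congr 1
  simp only [Prod.fst_add, Prod.snd_add, Matrix.add_apply]
  match_scalars <;> ring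

lemma psi_commutes (h : Rc X - 1 ≠ 0) (c : ℂ) :
    psiFun x (algebraMap ℂ (Matrix (Fin 2) (Fin 2) ℂ × ℂ) c)
      = algebraMap ℂ (Matrix X X ℂ) c := by
  have : psiP x (algebraMap ℂ (Matrix (Fin 2) (Fin 2) ℂ × ℂ) c) = (Rc X - 1) • (c • 1) := by
    rw [psiP]
    simp only [Prod.algebraMap_apply, Algebra.algebraMap_eq_smul_one, Algebra.algebraMap_self_apply,
      Matrix.smul_apply, Matrix.one_apply, smul_eq_mul]
    norm_num
    match_scalars <;> ring
  rw [psiFun, this, smul_smul, inv_mul_cancel₀ h, one_smul,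
    Algebra.algebraMap_eq_smul_one]

lemma psi_zero : psiFun x 0 = 0 := by
  rw [psiFun, psiP]
  simp

lemma psiP_apply (p : Matrix (Fin 2) (Fin 2) ℂ × ℂ) (u v : X) :
    psiP x p u v =
      ((Rc X - 1) * p.2) * (if u = v then 1 else 0) + (p.1 1 1 - p.2)
      + ((Rc X - 1) * (p.1 0 0 - p.2 - p.1 1 0) - p.1 0 1 + (p.1 1 1 - p.2)) *
          ((if u = x then 1 else 0) * (if v = x then 1 else 0))
      + (p.1 0 1 - (p.1 1 1 - p.2)) * (if u = x then 1 else 0)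
      + ((Rc X - 1) * p.1 1 0 - (p.1 1 1 - p.2)) * (if v = x then 1 else 0) := by
  rw [psiP]
  simp only [Matrix.add_apply, Matrix.smul_apply, smul_eq_mul, Matrix.one_apply,
    e_apply, eJ_apply, Je_apply]
  simp [Jmat]

end prods

theorem stmt2 (X : Type*) [Fintype X] [DecidableEq X] (r : ℕ) (hr : 3 ≤ r)
    (hcard : Fintype.card X = r) (x : X) :
    Nonempty (↥(Algebra.adjoin ℂ ({Amat X, AmatStar X r x} : Set (Matrix X X ℂ)))
      ≃ₐ[ℂ] (Matrix (Fin 2) (Fin 2) ℂ × ℂ)) := by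
  subst hcard
  have h1 : Rc X - 1 ≠ 0 := by
    rw [sub_ne_zero, Rc]
    exact_mod_cast (by omega : Fintype.card X ≠ 1)
  have h0 : (Fintype.card X : ℂ) ≠ 0 := by
    exact_mod_cast (by omega : Fintype.card X ≠ 0)
  obtain ⟨y, hyx⟩ : ∃ y, y ≠ x := Fintype.exists_ne_of_one_lt_card (by omega) x
  obtain ⟨z, hz⟩ : ∃ z, z ∉ ({x, y} : Finset X) := by
    by_contra hcon
    push_neg at hcon
    have hsub : (Finset.univ : Finset X) ⊆ {x, y} := fun w _ => hcon w
    have hc := Finset.card_le_card hsub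
    have h2 : ({x, y} : Finset X).card ≤ 2 := by
      apply le_trans (Finset.card_insert_le x ({y} : Finset X))
      simp
    simp only [Finset.card_univ] at hc
    omega
  simp only [Finset.mem_insert, Finset.mem_singleton, not_or] at hz
  obtain ⟨hzx, hzy⟩ := hz
  let Ψ : (Matrix (Fin 2) (Fin 2) ℂ × ℂ) →ₐ[ℂ] Matrix X X ℂ :=
    { toFun := psiFun x
      map_one' := psi_one x h1
      map_mul' := fun p q => psi_mul x h1 p q
      map_zero' := psi_zero x
      map_add' := psi_add x
      commutes' := psi_commutes x h1 }
  have hφψ : ∀ p : Matrix (Fin 2) (Fin 2) ℂ × ℂ,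
      ((Matrix.of ![![psiFun x p x x, (Rc X - 1) * psiFun x p x y],
        ![psiFun x p y x, psiFun x p y y + (Rc X - 2) * psiFun x p y z]],
        psiFun x p y y - psiFun x p y z) : Matrix (Fin 2) (Fin 2) ℂ × ℂ) = p := by
    intro p
    have key : ∀ u v : X, psiFun x p u v = (Rc X - 1)⁻¹ * psiP x p u v := by
      intro u v; rw [psiFun, Matrix.smul_apply, smul_eq_mul]
    refine Prod.ext ?_ ?_
    · ext i j
      have hyz : y ≠ z := fun h => hzy h.symm
      fin_cases i <;> fin_cases j <;>
        · simp [key, psiP_apply, hyx, hzx, hzy, hyz, Ne.symm hyx, Fin.mk_zero, Fin.mk_one]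
          try field_simp
          try ring
    · have hyz : y ≠ z := fun h => hzy h.symm
      simp [key, psiP_apply, hyx, hzx, hzy, hyz, Ne.symm hyx]
      try field_simp
      ring
  have hinj : Function.Injective Ψ := by
    intro p q hpq
    have h2 : psiFun x p = psiFun x q := hpq
    rw [← hφψ p, ← hφψ q, h2]
  -- range contains J and E0s
  have hJmem : Jmat X ∈ Ψ.range := by
    refine ⟨(Matrix.of ![![1, Rc X - 1], ![1, Rc X - 1]], 0), ?_⟩
    show psiFun x _ = Jmat X
    have hP : psiP x ((Matrix.of ![![1, Rc X - 1], ![1, Rc X - 1]], 0) :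
        Matrix (Fin 2) (Fin 2) ℂ × ℂ) = (Rc X - 1) • Jmat X := by
      rw [psiP]
      norm_num
      all_goals match_scalars <;> ring
    rw [psiFun, hP, smul_smul, inv_mul_cancel₀ h1, one_smul]
  have hemem : E0s X x ∈ Ψ.range := by
    refine ⟨(Matrix.of ![![1, 0], ![0, 0]], 0), ?_⟩
    show psiFun x _ = E0s X x
    have hP : psiP x ((Matrix.of ![![1, 0], ![0, 0]], 0) :
        Matrix (Fin 2) (Fin 2) ℂ × ℂ) = (Rc X - 1) • E0s X x := by
      rw [psiP]
      norm_num
      all_goals match_scalars <;> ring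
    rw [psiFun, hP, smul_smul, inv_mul_cancel₀ h1, one_smul]
  have hAmem : Amat X ∈ Ψ.range := by
    rw [Amat]
    exact Subalgebra.sub_mem _ hJmem (Subalgebra.one_mem _)
  have hAsmem : AmatStar X (Fintype.card X) x ∈ Ψ.range := by
    rw [AmatStar]
    exact Subalgebra.sub_mem _ (Subalgebra.smul_mem _ hemem _) (Subalgebra.one_mem _)
  have hle : Algebra.adjoin ℂ ({Amat X, AmatStar X (Fintype.card X) x} :
      Set (Matrix X X ℂ)) ≤ Ψ.range := by
    apply Algebra.adjoin_le
    intro s hs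
    simp only [Set.mem_insert_iff, Set.mem_singleton_iff] at hs
    rcases hs with rfl | rfl
    · exact hAmem
    · exact hAsmem
  have hJad : Jmat X ∈ Algebra.adjoin ℂ ({Amat X, AmatStar X (Fintype.card X) x} :
      Set (Matrix X X ℂ)) := by
    have hA : Amat X ∈ _ := Algebra.subset_adjoin (R := ℂ)
      (Set.mem_insert (Amat X) {AmatStar X (Fintype.card X) x})
    have : Jmat X = Amat X + 1 := by rw [Amat, sub_add_cancel]
    rw [this]
    exact Subalgebra.add_mem _ hA (Subalgebra.one_mem _)
  have head : E0s X x ∈ Algebra.adjoin ℂ ({Amat X, AmatStar X (Fintype.card X) x} :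
      Set (Matrix X X ℂ)) := by
    have hAs : AmatStar X (Fintype.card X) x ∈ Algebra.adjoin ℂ
        ({Amat X, AmatStar X (Fintype.card X) x} : Set (Matrix X X ℂ)) :=
      Algebra.subset_adjoin (R := ℂ) (by simp)
    have : E0s X x = (Fintype.card X : ℂ)⁻¹ • (AmatStar X (Fintype.card X) x + 1) := by
      rw [AmatStar, sub_add_cancel, smul_smul, inv_mul_cancel₀ h0, one_smul]
    rw [this]
    exact Subalgebra.smul_mem _ (Subalgebra.add_mem _ hAs (Subalgebra.one_mem _)) _
  have hge : Ψ.range ≤ Algebra.adjoin ℂ ({Amat X, AmatStar X (Fintype.card X) x} :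
      Set (Matrix X X ℂ)) := by
    rintro M ⟨p, rfl⟩
    show psiFun x p ∈ _
    rw [psiFun, psiP]
    apply Subalgebra.smul_mem
    apply Subalgebra.add_mem
    apply Subalgebra.add_mem
    apply Subalgebra.add_mem
    apply Subalgebra.add_mem
    · exact Subalgebra.smul_mem _ (Subalgebra.one_mem _) _
    · exact Subalgebra.smul_mem _ hJad _
    · exact Subalgebra.smul_mem _ head _
    · exact Subalgebra.smul_mem _ (Subalgebra.mul_mem _ head hJad) _
    · exact Subalgebra.smul_mem _ (Subalgebra.mul_mem _ hJad head) _
  have hrange : Ψ.range = Algebra.adjoin ℂ ({Amat X, AmatStar X (Fintype.card X) x} :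
      Set (Matrix X X ℂ)) := le_antisymm hge hle
  exact ⟨((AlgEquiv.ofInjective Ψ hinj).trans (Subalgebra.equivOfEq _ _ hrange)).symm⟩
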